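/- arXiv:2308.08735 — 3 statements merged into one kernel-verified Lean document; each statement's English description precedes it below -/
import Mathlib

section
/- Let f : ℝⁿ → ℝ ∪ {∞} be proper, lower semicontinuous and prox-bounded with threshold λ_f; let Λ ⊆ dom f be a nonempty compact set on which f is constant, with 0 ∈ ∂(e_λ f)(x̄) for all x̄ ∈ Λ, where λ ∈ (0, λ_f). Suppose f satisfies the uniformized Hölder error bound on Λ with exponent γ > 0 and constant μ ≥ 2λ, and that there exists ε̄ > 0 such that for every x with d(x, Λ) < ε̄ and f(x) > f(x̄) (x̄ ∈ Λ), some y ∈ P_λ f(x) satisfies f(y) ≥ f(x̄). Then e_λ f satisfies the uniformized Hölder error bound on Λ with exponent max{2, γ} and constant 2^{max{1, γ-1}} μ. -/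
open Filter Topology Set
open scoped ENNReal NNReal RealInnerProductSpace

noncomputable section

variable {E : Type*} [NormedAddCommGroup E] [InnerProductSpace ℝ E]

/-- Fréchet (regular) subdifferential of an `EReal`-valued function. -/
def fsubd (f : E → EReal) (x : E) : Set E :=
  {v | f x ≠ ⊤ ∧ f x ≠ ⊥ ∧ ∀ ε : ℝ, 0 < ε → ∀ᶠ y in 𝓝 x,
      (((f x).toReal + inner ℝ v (y - x) - ε * ‖y - x‖ : ℝ) : EReal) ≤ f y}

/-- Limiting (Mordukhovich) subdifferential. -/
def lsubd (f : E → EReal) (x : E) : Set E :=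
  {v | ∃ xs vs : ℕ → E, Tendsto xs atTop (𝓝 x) ∧
      Tendsto (fun k => f (xs k)) atTop (𝓝 (f x)) ∧
      Tendsto vs atTop (𝓝 v) ∧ ∀ k, vs k ∈ fsubd f (xs k)}

/-- Sublevel set `{z | f z ≤ a}`. -/
def slev (f : E → EReal) (a : EReal) : Set E := {z | f z ≤ a}

/-- `d(0, ∂ f x)`, with the convention that the distance to the empty set is `∞`. -/
def subdist (f : E → EReal) (x : E) : ℝ≥0∞ := EMetric.infEdist 0 (lsubd f x)

/-- Conversion of an extended real to `ℝ≥0∞` (truncating negative values). -/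
def toENN (a : EReal) : ℝ≥0∞ := if a = ⊤ then ⊤ else ENNReal.ofReal a.toReal

/-- Moreau envelope `e_λ f`. -/
def moreauEnv (f : E → EReal) (lam : ℝ) (x : E) : EReal :=
  ⨅ y, f y + ((‖y - x‖ ^ 2 / (2 * lam) : ℝ) : EReal)

/-- Proximal mapping `P_λ f` (set of minimizers). -/
def proxPts (f : E → EReal) (lam : ℝ) (x : E) : Set E :=
  {y | ∀ z, f y + ((‖y - x‖ ^ 2 / (2 * lam) : ℝ) : EReal)
        ≤ f z + ((‖z - x‖ ^ 2 / (2 * lam) : ℝ) : EReal)}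

/-- `f` is prox-bounded. -/
def ProxBdd (f : E → EReal) : Prop := ∃ lam > (0 : ℝ), ∃ x, moreauEnv f lam x ≠ ⊥

/-- Threshold `λ_f` of prox-boundedness. -/
def proxThreshold (f : E → EReal) : ℝ :=
  sSup {lam | 0 < lam ∧ ∃ x, moreauEnv f lam x ≠ ⊥}

/-- `f` is proper (never `-∞`, somewhere finite). -/
def IsProperFn (f : E → EReal) : Prop := (∃ x, f x ≠ ⊤) ∧ ∀ x, f x ≠ ⊥

/-- Kurdyka–Łojasiewicz property at `xb` with exponent `γ` and constant `μ`. -/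
def KLAt (f : E → EReal) (xb : E) (γ μ : ℝ) : Prop :=
  ∃ η > (0:ℝ), ∃ ν > (0:ℝ), ∀ x ∈ Metric.ball xb η,
    f xb < f x → f x < f xb + (ν : EReal) →
    toENN (f x - f xb) ^ γ ≤ ENNReal.ofReal μ * subdist f x

/-- Level-set subdifferential error bound at `xb` with exponent `γ` and constant `μ`. -/
def LSEBAt (f : E → EReal) (xb : E) (γ μ : ℝ) : Prop :=
  ∃ η > (0:ℝ), ∃ ν > (0:ℝ), ∀ x ∈ Metric.ball xb η,
    f xb < f x → f x < f xb + (ν : EReal) →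
    EMetric.infEdist x (slev f (f xb)) ^ γ ≤ ENNReal.ofReal μ * subdist f x

/-- Local Hölder error bound at `xb` with exponent `γ` and constant `μ`. -/
def LHEBAt (f : E → EReal) (xb : E) (γ μ : ℝ) : Prop :=
  ∃ η > (0:ℝ), ∀ x ∈ Metric.ball xb η, f xb < f x →
    EMetric.infEdist x (slev f (f xb)) ^ γ ≤ ENNReal.ofReal μ * toENN (f x - f xb)

/-- Uniformized KL property on `Ω`. -/
def uKL (f : E → EReal) (Ω : Set E) (γ μ : ℝ) : Prop :=
  ∃ ε > (0:ℝ), ∃ ν > (0:ℝ), ∀ xb ∈ Ω, ∀ x, Metric.infDist x Ω < ε →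
    f xb < f x → f x < f xb + (ν : EReal) →
    toENN (f x - f xb) ^ γ ≤ ENNReal.ofReal μ * subdist f x

/-- Uniformized level-set subdifferential error bound on `Ω`. -/
def uLSEB (f : E → EReal) (Ω : Set E) (γ μ : ℝ) : Prop :=
  ∃ ε > (0:ℝ), ∃ ν > (0:ℝ), ∀ xb ∈ Ω, ∀ x, Metric.infDist x Ω < ε →
    f xb < f x → f x < f xb + (ν : EReal) →
    EMetric.infEdist x (slev f (f xb)) ^ γ ≤ ENNReal.ofReal μ * subdist f x

/-- Uniformized Hölder error bound on `Ω`. -/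
def uHEB (f : E → EReal) (Ω : Set E) (γ μ : ℝ) : Prop :=
  ∃ ε > (0:ℝ), ∀ xb ∈ Ω, ∀ x, Metric.infDist x Ω < ε → f xb < f x →
    EMetric.infEdist x (slev f (f xb)) ^ γ ≤ ENNReal.ofReal μ * toENN (f x - f xb)

/-- Prox-regularity of `f` at `xb` for `vb` with constant `ρ`. -/
def ProxRegularAt (f : E → EReal) (xb vb : E) (ρ : ℝ) : Prop :=
  vb ∈ lsubd f xb ∧ ∃ ε > (0:ℝ), ∀ x v, v ∈ lsubd f x → v ∈ Metric.ball vb ε →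
    x ∈ Metric.ball xb ε → f x < f xb + (ε : EReal) → ∀ y ∈ Metric.ball xb ε,
      f x + (((inner ℝ v (y - x) : ℝ) - ρ / 2 * ‖y - x‖ ^ 2 : ℝ) : EReal) ≤ f y


section Auxiliary

private lemma add_rpow_le_two_rpow {a b p : ℝ} (ha : 0 ≤ a) (hb : 0 ≤ b) (hp : 1 ≤ p) :
    (a + b) ^ p ≤ 2 ^ (p - 1) * (a ^ p + b ^ p) := by
  have h := NNReal.rpow_add_le_mul_rpow_add_rpow a.toNNReal b.toNNReal hp
  have h2 := NNReal.coe_le_coe.mpr h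
  push_cast at h2
  rwa [Real.coe_toNNReal a ha, Real.coe_toNNReal b hb] at h2

private lemma ereal_sub_real_le_of_le_add {a : EReal} {M r : ℝ} (ha : a ≠ ⊥)
    (h : (M : EReal) ≤ a + (r : EReal)) : ((M - r : ℝ) : EReal) ≤ a := by
  induction a using EReal.rec with
  | bot => exact absurd rfl ha
  | top => exact le_top
  | coe z =>
      rw [← EReal.coe_add, EReal.coe_le_coe_iff] at h
      exact EReal.coe_le_coe_iff.mpr (by linarith)

private lemma toENN_coe (r : ℝ) : toENN ((r : ℝ) : EReal) = ENNReal.ofReal r := by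
  rw [toENN, if_neg (EReal.coe_ne_top r), EReal.toReal_coe]

private lemma moreau_le (f : E → EReal) (lam : ℝ) (x z : E) :
    moreauEnv f lam x ≤ f z + ((‖z - x‖ ^ 2 / (2 * lam) : ℝ) : EReal) := iInf_le _ z

private lemma moreau_le_self (f : E → EReal) (lam : ℝ) (x : E) :
    moreauEnv f lam x ≤ f x := by
  have h := moreau_le f lam x x
  simpa using h

private lemma exists_quad_minorant {f : E → EReal} (hnb : ∀ x, f x ≠ ⊥)
    {lam : ℝ} (hlam : lam ∈ Set.Ioo 0 (proxThreshold f)) :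
    ∃ lam' : ℝ, lam < lam' ∧ ∃ x₀ : E, ∃ M : ℝ,
      ∀ y, ((M - ‖y - x₀‖ ^ 2 / (2 * lam') : ℝ) : EReal) ≤ f y := by
  set S := {l : ℝ | 0 < l ∧ ∃ x, moreauEnv f l x ≠ ⊥} with hS
  have hpos : 0 < lam := hlam.1
  have hlt : lam < sSup S := hlam.2
  have hSne : S.Nonempty := by
    by_contra hc
    rw [Set.not_nonempty_iff_eq_empty] at hc
    rw [hc, Real.sSup_empty] at hlt
    linarith
  have hBdd : BddAbove S := by
    by_contra hc
    rw [Real.sSup_of_not_bddAbove hc] at hlt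
    linarith
  obtain ⟨l, hlS, hl⟩ := exists_lt_of_lt_csSup hSne hlt
  obtain ⟨hl0, x₀, hx₀⟩ := hlS
  obtain ⟨M, hM⟩ : ∃ M : ℝ, (M : EReal) ≤ moreauEnv f l x₀ := by
    by_cases htop : moreauEnv f l x₀ = ⊤
    · exact ⟨0, htop ▸ le_top⟩
    · exact ⟨(moreauEnv f l x₀).toReal, (EReal.coe_toReal htop hx₀).le⟩
  refine ⟨l, hl, x₀, M, fun y => ?_⟩
  exact ereal_sub_real_le_of_le_add (hnb y) (hM.trans (moreau_le f l x₀ y))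

set_option maxHeartbeats 2000000 in
private lemma fsubd_moreau_lower {f : E → EReal} (hnb : ∀ x, f x ≠ ⊥)
    (hlsc : LowerSemicontinuous f) {lam lam' : ℝ} (hlam : 0 < lam) (hll : lam < lam')
    {x₀ : E} {M : ℝ} (hM : ∀ y, ((M - ‖y - x₀‖ ^ 2 / (2 * lam') : ℝ) : EReal) ≤ f y)
    {x v : E} (hv : v ∈ fsubd (moreauEnv f lam) x) :
    f (x - lam • v) ≤ moreauEnv f lam x := by
  obtain ⟨hvt, hvb, hvs⟩ := hv
  set m := (moreauEnv f lam x).toReal with hm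
  have hfin : moreauEnv f lam x = (m : EReal) := (EReal.coe_toReal hvt hvb).symm
  clear_value m
  have hlam' : 0 < lam' := hlam.trans hll
  set d := ‖x - x₀‖ with hd
  have hd0 : 0 ≤ d := hd ▸ norm_nonneg _
  clear_value d
  set c₂ : ℝ := 1 / (2 * lam) - 1 / (2 * lam') with hc₂
  have hc₂0 : 0 < c₂ := by
    rw [hc₂, sub_pos]
    apply one_div_lt_one_div_of_lt <;> nlinarith
  clear_value c₂
  set K₀ : ℝ := m + 1 - M + d ^ 2 / (2 * lam') with hK₀def
  set T : ℝ := d / (lam' * c₂) + Real.sqrt (max K₀ 0 / c₂) with hT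
  have hT0 : 0 ≤ T := by
    rw [hT]
    apply add_nonneg (div_nonneg hd0 (by positivity)) (Real.sqrt_nonneg _)
  have hTbd : ∀ z : E, f z + ((‖z - x‖ ^ 2 / (2 * lam) : ℝ) : EReal) ≤ ((m + 1 : ℝ) : EReal) →
      ‖z - x‖ ≤ T := by
    intro z hz
    have hzt : f z ≠ ⊤ := by
      intro htop
      rw [htop, EReal.top_add_coe] at hz
      exact (EReal.coe_ne_top (m + 1)) (top_le_iff.mp hz)
    have hzr : f z = ((f z).toReal : EReal) := (EReal.coe_toReal hzt (hnb z)).symm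
    set fz := (f z).toReal with hfzd
    clear_value fz
    have h1 : fz + ‖z - x‖ ^ 2 / (2 * lam) ≤ m + 1 := by
      rw [hzr, ← EReal.coe_add, EReal.coe_le_coe_iff] at hz
      exact hz
    have h2 : M - ‖z - x₀‖ ^ 2 / (2 * lam') ≤ fz := by
      have h3 := hM z
      rw [hzr, EReal.coe_le_coe_iff] at h3
      exact h3
    have h3 : ‖z - x₀‖ ≤ ‖z - x‖ + d := by
      calc ‖z - x₀‖ = ‖(z - x) + (x - x₀)‖ := by abel_nf
      _ ≤ ‖z - x‖ + d := by rw [hd]; exact norm_add_le _ _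
    by_contra hcon
    push_neg at hcon
    set t := ‖z - x‖ with htdef
    have ht0 : 0 ≤ t := htdef ▸ norm_nonneg _
    clear_value t
    have ht0' : 0 < t := lt_of_le_of_lt hT0 hcon
    set s := Real.sqrt (max K₀ 0 / c₂) with hs
    have hs0 : 0 ≤ s := hs ▸ Real.sqrt_nonneg _
    have hs2 : s ^ 2 = max K₀ 0 / c₂ := by rw [hs]; exact Real.sq_sqrt (by positivity)
    have hTs : T = d / (lam' * c₂) + s := hT
    clear_value s
    clear hT
    clear_value K₀ T
    have hK0le : K₀ ≤ c₂ * s ^ 2 := by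
      rw [hs2, mul_div_cancel₀ _ hc₂0.ne']
      exact le_max_left _ _
    have hsq : ‖z - x₀‖ ^ 2 ≤ (t + d) ^ 2 := by nlinarith [norm_nonneg (z - x₀)]
    have hq : c₂ * t ^ 2 - t * d / lam' ≤ K₀ := by
      rw [hc₂, hK₀def]
      set nz := ‖z - x₀‖
      have h1' : 2*lam*fz + t^2 ≤ 2*lam*(m+1) := by
        have h := mul_le_mul_of_nonneg_left h1 (by positivity : (0:ℝ) ≤ 2*lam)
        calc 2*lam*fz + t^2 = 2*lam*(fz + t^2/(2*lam)) := by field_simp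
        _ ≤ 2*lam*(m+1) := h
      have h2' : 2*lam'*M - nz^2 ≤ 2*lam'*fz := by
        have h := mul_le_mul_of_nonneg_left h2 (by positivity : (0:ℝ) ≤ 2*lam')
        calc 2*lam'*M - nz^2 = 2*lam'*(M - nz^2/(2*lam')) := by field_simp
        _ ≤ 2*lam'*fz := h
      rw [← sub_nonneg]
      have expand : (m + 1 - M + d^2/(2*lam') - ((1/(2*lam) - 1/(2*lam')) * t^2 - t*d/lam'))
          * (2*lam*(2*lam'))
          = ((2*lam*(m+1)) - (2*lam*fz + t^2))*(2*lam')
            + ((2*lam'*fz) - (2*lam'*M - nz^2))*(2*lam)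
            + ((t+d)^2 - nz^2)*(2*lam) + (2*lam)*t^2 - (2*lam)*(t+d)^2 + 2*lam*d^2
            + t*d*4*lam := by
        field_simp; ring
      have key : 0 ≤ (m + 1 - M + d^2/(2*lam') - ((1/(2*lam) - 1/(2*lam')) * t^2 - t*d/lam'))
          * (2*lam*(2*lam')) := by
        rw [expand]; nlinarith [h1', h2', hsq]
      have hpos : (0:ℝ) < 2*lam*(2*lam') := by positivity
      exact le_of_mul_le_mul_right (by rw [zero_mul]; exact key) hpos
    have hst : s < t := by
      have : s ≤ T := hTs ▸ le_add_of_nonneg_left (div_nonneg hd0 (by positivity))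
      linarith
    have hdt : d / lam' < c₂ * (t - s) := by
      have h4 : d / (lam' * c₂) < t - s := by linarith
      rw [div_lt_iff₀ (by positivity)] at h4 ⊢
      nlinarith
    have hq' : c₂ * t ^ 2 - t * (d / lam') ≤ K₀ := by rw [← mul_div_assoc]; exact hq
    obtain ⟨D, hD⟩ : ∃ D, d / lam' = D := ⟨_, rfl⟩
    rw [hD] at hq' hdt
    nlinarith [mul_lt_mul_of_pos_left hdt ht0', mul_le_mul_of_nonneg_left hst.le (mul_nonneg hc₂0.le hs0)]
  -- constants for the approximation claim
  set C' : ℝ := ‖v‖ + T / lam + 1 with hC'def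
  have hC'1 : 1 ≤ C' := by
    rw [hC'def]
    have : 0 ≤ ‖v‖ + T / lam := add_nonneg (norm_nonneg _) (div_nonneg hT0 hlam.le)
    linarith
  have hC'0 : 0 < C' := lt_of_lt_of_le one_pos hC'1
  set K : ℝ := 1 + C' + C' ^ 2 / (2 * lam) with hKdef
  have hK0 : 0 < K := by rw [hKdef]; positivity
  clear_value K
  have hC : ∀ ε : ℝ, 0 < ε → ε ≤ 1 → ∃ z : E,
      f z ≤ ((m + ε : ℝ) : EReal) ∧ ‖z - (x - lam • v)‖ ≤ lam * Real.sqrt (ε * K) := by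
    intro ε hε hε1
    obtain ⟨r, hr, hball⟩ := Metric.eventually_nhds_iff.mp (hvs ε hε)
    set t₀ := min (r / C') ε with ht₀def
    have ht₀ : 0 < t₀ := lt_min (by positivity) hε
    have ht₀ε : t₀ ≤ ε := min_le_right _ _
    have hlt : moreauEnv f lam x < ((m + ε * t₀ : ℝ) : EReal) := by
      rw [hfin, EReal.coe_lt_coe_iff]
      nlinarith
    obtain ⟨z, hz⟩ := iInf_lt_iff.mp hlt
    have hzt : f z ≠ ⊤ := by
      intro htop
      rw [htop, EReal.top_add_coe] at hz
      exact absurd hz (by simp)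
    have hzr : f z = ((f z).toReal : EReal) := (EReal.coe_toReal hzt (hnb z)).symm
    set fz := (f z).toReal with hfzd
    have hgz : fz + ‖z - x‖ ^ 2 / (2 * lam) ≤ m + ε * t₀ := by
      rw [hzr, ← EReal.coe_add] at hz
      exact (EReal.coe_lt_coe_iff.mp hz).le
    have hεt₀1 : ε * t₀ ≤ 1 := by nlinarith
    have hTz : ‖z - x‖ ≤ T := by
      apply hTbd z
      rw [hzr, ← EReal.coe_add, EReal.coe_le_coe_iff]
      linarith
    set u := v + (1 / lam) • (z - x) with hu
    have hun : ‖u‖ ≤ C' - 1 := by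
      calc ‖u‖ ≤ ‖v‖ + ‖(1 / lam) • (z - x)‖ := norm_add_le _ _
      _ = ‖v‖ + (1 / lam) * ‖z - x‖ := by
          rw [norm_smul, Real.norm_eq_abs, abs_of_pos (by positivity)]
      _ ≤ ‖v‖ + (1 / lam) * T := by gcongr
      _ = C' - 1 := by rw [hC'def]; ring
    have hun' : ‖u‖ ≤ C' := by linarith
    set y := x + t₀ • u with hy
    have hyx2 : y - x = t₀ • u := by rw [hy]; abel
    have hyxd : dist y x < r := by
      rw [dist_eq_norm, hyx2, norm_smul, Real.norm_eq_abs, abs_of_pos ht₀]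
      calc t₀ * ‖u‖ ≤ (r / C') * (C' - 1) := by
            apply mul_le_mul (min_le_left _ _) hun (norm_nonneg _) (by positivity)
      _ < r := by
          rw [div_mul_eq_mul_div, div_lt_iff₀ hC'0]
          nlinarith
    have hkey := hball hyxd
    have hup : moreauEnv f lam y ≤ ((fz + ‖z - y‖ ^ 2 / (2 * lam) : ℝ) : EReal) := by
      have h5 := moreau_le f lam y z
      rwa [hzr, ← EReal.coe_add] at h5
    have hreal : m + inner ℝ v (y - x) - ε * ‖y - x‖ ≤ fz + ‖z - y‖ ^ 2 / (2 * lam) := by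
      have h5 := le_trans hkey hup
      rw [EReal.coe_le_coe_iff] at h5
      exact h5
    have hinner : (inner ℝ v (y - x) : ℝ) = t₀ * inner ℝ v u := by
      rw [hyx2, real_inner_smul_right]
    have hnorm : ‖y - x‖ = t₀ * ‖u‖ := by
      rw [hyx2, norm_smul, Real.norm_eq_abs, abs_of_pos ht₀]
    have hzy : ‖z - y‖ ^ 2 = ‖z - x‖ ^ 2 - 2 * (t₀ * inner ℝ (z - x) u) + t₀ ^ 2 * ‖u‖ ^ 2 := by
      have h6 : z - y = (z - x) - t₀ • u := by rw [hy]; abel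
      rw [h6, norm_sub_sq_real, real_inner_smul_right, norm_smul, Real.norm_eq_abs,
        abs_of_pos ht₀]
      ring
    have huu : (inner ℝ v u : ℝ) + (1 / lam) * inner ℝ (z - x) u = ‖u‖ ^ 2 := by
      rw [← real_inner_self_eq_norm_sq]
      nth_rewrite 3 [hu]
      rw [inner_add_left, real_inner_smul_left]
    have hu2 : ‖u‖ ^ 2 ≤ ε * K := by
      rw [hinner, hnorm, hzy] at hreal
      have huu' : t₀ * inner ℝ v u + t₀ * ((1 / lam) * inner ℝ (z - x) u) = t₀ * ‖u‖ ^ 2 := by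
        rw [← huu]; ring
      have hstep : t₀ * ‖u‖ ^ 2 ≤ t₀ * (ε + ε * ‖u‖ + t₀ * ‖u‖ ^ 2 / (2 * lam)) := by
        have hexp : fz + (‖z - x‖ ^ 2 - 2 * (t₀ * inner ℝ (z - x) u) + t₀ ^ 2 * ‖u‖ ^ 2) / (2 * lam)
            = (fz + ‖z - x‖ ^ 2 / (2 * lam)) - t₀ * ((1 / lam) * inner ℝ (z - x) u)
              + t₀ * (t₀ * ‖u‖ ^ 2 / (2 * lam)) := by
          field_simp
          ring
        rw [hexp] at hreal
        nlinarith [hreal, hgz, huu']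
      have hstep2 : ‖u‖ ^ 2 ≤ ε + ε * ‖u‖ + t₀ * ‖u‖ ^ 2 / (2 * lam) :=
        le_of_mul_le_mul_left (by linarith [hstep]) ht₀
      have hb1 : ε * ‖u‖ ≤ ε * C' := by nlinarith
      have hb2 : t₀ * ‖u‖ ^ 2 / (2 * lam) ≤ ε * C' ^ 2 / (2 * lam) := by
        apply div_le_div_of_nonneg_right ?_ (by positivity) |>.trans_eq rfl
        nlinarith [sq_nonneg ‖u‖, norm_nonneg u]
      calc ‖u‖ ^ 2 ≤ ε + ε * C' + ε * C' ^ 2 / (2 * lam) := by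
            simp only [div_eq_mul_inv] at hstep2 hb2 ⊢
            obtain ⟨I, hI⟩ : ∃ I, (2 * lam)⁻¹ = I := ⟨_, rfl⟩
            rw [hI] at hstep2 hb2 ⊢
            linarith
      _ = ε * K := by rw [hKdef]; field_simp
    have husqrt : ‖u‖ ≤ Real.sqrt (ε * K) :=
      (Real.le_sqrt (norm_nonneg _) (by positivity)).mpr hu2
    refine ⟨z, ?_, ?_⟩
    · rw [hzr, EReal.coe_le_coe_iff]
      have : 0 ≤ ‖z - x‖ ^ 2 / (2 * lam) := by positivity
      nlinarith
    · have h7 : z - (x - lam • v) = lam • u := by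
        rw [hu, smul_add, smul_smul, mul_one_div, div_self hlam.ne', one_smul]
        abel
      rw [h7, norm_smul, Real.norm_eq_abs, abs_of_pos hlam]
      exact mul_le_mul_of_nonneg_left husqrt hlam.le
  -- conclude via lower semicontinuity
  by_contra hcon
  push_neg at hcon
  rw [hfin] at hcon
  obtain ⟨b, hb1, hb2⟩ := EReal.exists_between_coe_real hcon
  obtain ⟨r', hr', hball'⟩ := Metric.eventually_nhds_iff.mp (hlsc (x - lam • v) b hb2)
  have hbm : m < b := EReal.coe_lt_coe_iff.mp hb1
  set ε := min (min 1 ((b - m) / 2)) (r' ^ 2 / (2 * lam ^ 2 * K)) with hεdef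
  have hε : 0 < ε := lt_min (lt_min one_pos (by linarith)) (by positivity)
  obtain ⟨z, hz1, hz2⟩ := hC ε hε ((min_le_left _ _).trans (min_le_left _ _))
  have hεK : ε * K ≤ r' ^ 2 / (2 * lam ^ 2) := by
    have h8 : ε ≤ r' ^ 2 / (2 * lam ^ 2 * K) := min_le_right _ _
    calc ε * K ≤ (r' ^ 2 / (2 * lam ^ 2 * K)) * K := by nlinarith
    _ = r' ^ 2 / (2 * lam ^ 2) := by field_simp
  have h6 : lam * Real.sqrt (ε * K) < r' := by
    set s2 := Real.sqrt (ε * K) with hs2d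
    have hs2n : 0 ≤ s2 := hs2d ▸ Real.sqrt_nonneg _
    have hs2sq : s2 ^ 2 = ε * K := by rw [hs2d]; exact Real.sq_sqrt (by positivity)
    clear_value s2
    by_contra hcc
    push_neg at hcc
    have hεK' : ε * K * (2 * lam ^ 2) ≤ r' ^ 2 := (le_div_iff₀ (by positivity)).mp hεK
    have hprod : r' * r' ≤ lam ^ 2 * (ε * K) := by
      calc r' * r' ≤ (lam * s2) * (lam * s2) :=
            mul_le_mul hcc hcc hr'.le (mul_nonneg hlam.le hs2n)
      _ = lam ^ 2 * s2 ^ 2 := by ring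
      _ = lam ^ 2 * (ε * K) := by rw [hs2sq]
    nlinarith [hεK', hprod, mul_pos hr' hr']
  have hzb : (b : EReal) < f z := hball' (by rw [dist_eq_norm]; linarith)
  have h9 : b < m + ε := EReal.coe_lt_coe_iff.mp (lt_of_lt_of_le hzb hz1)
  have h10 : ε ≤ (b - m) / 2 := (min_le_left _ _).trans (min_le_right _ _)
  linarith

end Auxiliary

set_option maxHeartbeats 1000000 in
theorem stmt15 {n : ℕ} (f : EuclideanSpace ℝ (Fin n) → EReal)
    (hproper : IsProperFn f) (hlsc : LowerSemicontinuous f) (hpb : ProxBdd f)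
    (Λ : Set (EuclideanSpace ℝ (Fin n))) (hne : Λ.Nonempty) (hcpt : IsCompact Λ)
    (hdom : ∀ x ∈ Λ, f x ≠ ⊤) (hconst : ∀ x ∈ Λ, ∀ y ∈ Λ, f x = f y)
    (lam : ℝ) (hlam : lam ∈ Set.Ioo 0 (proxThreshold f))
    (hcrit : ∀ xb ∈ Λ, (0 : EuclideanSpace ℝ (Fin n)) ∈ lsubd (moreauEnv f lam) xb)
    (γ μ : ℝ) (hγ : 0 < γ) (hμ : 2 * lam ≤ μ) (h : uHEB f Λ γ μ)
    (hiv : ∃ εb > (0:ℝ), ∀ xb ∈ Λ, ∀ x, Metric.infDist x Λ < εb → f xb < f x →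
      ∃ y ∈ proxPts f lam x, f xb ≤ f y) :
    uHEB (moreauEnv f lam) Λ (max 2 γ) ((2:ℝ) ^ (max 1 (γ - 1)) * μ) := by
  obtain ⟨hex, hnb⟩ := hproper
  obtain ⟨lam', hll, x₀, M, hM⟩ := exists_quad_minorant hnb hlam
  have hlam0 : 0 < lam := hlam.1
  -- Step 1 : the Moreau envelope agrees with f on Λ
  have hA : ∀ xb ∈ Λ, moreauEnv f lam xb = f xb := by
    intro xb hxb
    refine le_antisymm (moreau_le_self f lam xb) ?_
    by_contra hcon
    push_neg at hcon
    obtain ⟨b, hb1, hb2⟩ := EReal.exists_between_coe_real hcon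
    obtain ⟨xs, vs, hxs, hes, hvs, hfs⟩ := hcrit xb hxb
    have hkey : ∀ k, f (xs k - lam • vs k) ≤ moreauEnv f lam (xs k) := fun k =>
      fsubd_moreau_lower hnb hlsc hlam0 hll hM (hfs k)
    have hzs : Tendsto (fun k => xs k - lam • vs k) atTop (𝓝 xb) := by
      have h1 : Tendsto (fun k => lam • vs k) atTop (𝓝 (lam • (0 : EuclideanSpace ℝ (Fin n)))) :=
        hvs.const_smul lam
      rw [smul_zero] at h1
      simpa using hxs.sub h1
    have hev : ∀ᶠ k in atTop, (b : EReal) < f (xs k - lam • vs k) :=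
      hzs.eventually (hlsc xb b hb2)
    have hev2 : ∀ᶠ k in atTop, (b : EReal) ≤ moreauEnv f lam (xs k) :=
      hev.mono fun k hk => hk.le.trans (hkey k)
    exact absurd (ge_of_tendsto hes hev2) (not_le.mpr hb1)
  obtain ⟨εf, hεf0, hH⟩ := h
  obtain ⟨εb, hεb0, hIV⟩ := hiv
  have hμ0 : 0 < μ := lt_of_lt_of_le (by linarith) hμ
  set ε := min (min (εf / 2) εb) (min 1 (Real.sqrt (2 * lam / μ))) with hεdef
  have hε0 : 0 < ε := by
    refine lt_min (lt_min (by linarith) hεb0) (lt_min one_pos ?_)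
    exact Real.sqrt_pos.mpr (by positivity)
  have hεf2 : ε ≤ εf / 2 := (min_le_left _ _).trans (min_le_left _ _)
  have hεεb : ε ≤ εb := (min_le_left _ _).trans (min_le_right _ _)
  have hε1 : ε ≤ 1 := (min_le_right _ _).trans (min_le_left _ _)
  have hεσ : ε ≤ Real.sqrt (2 * lam / μ) := (min_le_right _ _).trans (min_le_right _ _)
  have hεsq : μ * ε ^ 2 ≤ 2 * lam := by
    have h1 : ε ^ 2 ≤ 2 * lam / μ := by
      calc ε ^ 2 ≤ Real.sqrt (2 * lam / μ) ^ 2 := by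
            apply pow_le_pow_left₀ hε0.le hεσ
      _ = 2 * lam / μ := Real.sq_sqrt (by positivity)
    calc μ * ε ^ 2 ≤ μ * (2 * lam / μ) := by nlinarith
    _ = 2 * lam := by field_simp
  clear_value ε
  refine ⟨ε, hε0, ?_⟩
  intro xb hxb x hxd hlt
  have hcb : f xb ≠ ⊤ := hdom xb hxb
  set c := (f xb).toReal with hcdef
  have hfc : f xb = (c : EReal) := (EReal.coe_toReal hcb (hnb xb)).symm
  clear_value c
  have hexb : moreauEnv f lam xb = (c : EReal) := (hA xb hxb).trans hfc
  -- a point of Λ close to x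
  obtain ⟨xb', hxb', hdist⟩ : ∃ z ∈ Λ, dist x z < ε := by
    rw [← Metric.infDist_lt_iff hne]
    exact hxd
  -- upper bound for the envelope at x
  have hub : moreauEnv f lam x ≤ ((c + ε ^ 2 / (2 * lam) : ℝ) : EReal) := by
    calc moreauEnv f lam x ≤ f xb' + ((‖xb' - x‖ ^ 2 / (2 * lam) : ℝ) : EReal) :=
          moreau_le f lam x xb'
    _ = ((c + ‖xb' - x‖ ^ 2 / (2 * lam) : ℝ) : EReal) := by
        rw [← hconst xb hxb xb' hxb', hfc, ← EReal.coe_add]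
    _ ≤ ((c + ε ^ 2 / (2 * lam) : ℝ) : EReal) := by
        rw [EReal.coe_le_coe_iff]
        have h1 : ‖xb' - x‖ ≤ ε := by
          rw [norm_sub_rev, ← dist_eq_norm]
          exact hdist.le
        have h2 : ‖xb' - x‖ ^ 2 ≤ ε ^ 2 := pow_le_pow_left₀ (norm_nonneg _) h1 2
        have h3 : (0:ℝ) < 2 * lam := by linarith
        gcongr
  have hlt' : (c : EReal) < moreauEnv f lam x := hexb ▸ hlt
  have hxtop : moreauEnv f lam x ≠ ⊤ := ne_top_of_le_ne_top (EReal.coe_ne_top _) hub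
  have hxbot : moreauEnv f lam x ≠ ⊥ := by
    intro hbot
    rw [hbot] at hlt'
    exact absurd hlt' (by simp)
  set ex := (moreauEnv f lam x).toReal with hexdef
  have hexx : moreauEnv f lam x = (ex : EReal) := (EReal.coe_toReal hxtop hxbot).symm
  clear_value ex
  have hcex : c < ex := EReal.coe_lt_coe_iff.mp (hexx ▸ hlt')
  have hexub : ex ≤ c + ε ^ 2 / (2 * lam) := EReal.coe_le_coe_iff.mp (hexx ▸ hub)
  -- f xb < f x
  have hfx : f xb < f x := by
    by_contra hcc
    push_neg at hcc
    have h1 : moreauEnv f lam x ≤ (c : EReal) :=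
      (moreau_le_self f lam x).trans (hcc.trans_eq hfc)
    exact absurd h1 (not_le.mpr hlt')
  obtain ⟨y, hy, hyc⟩ := hIV xb hxb x (lt_of_lt_of_le hxd hεεb) hfx
  have hprox : moreauEnv f lam x = f y + ((‖y - x‖ ^ 2 / (2 * lam) : ℝ) : EReal) :=
    le_antisymm (moreau_le f lam x y) (le_iInf hy)
  have hyt : f y ≠ ⊤ := by
    intro htop
    rw [htop, EReal.top_add_coe] at hprox
    exact hxtop hprox
  set fy := (f y).toReal with hfydef
  have hfy : f y = (fy : EReal) := (EReal.coe_toReal hyt (hnb y)).symm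
  clear_value fy
  set a := ‖y - x‖ with hadef
  have ha0 : 0 ≤ a := hadef ▸ norm_nonneg _
  have hkey : ex = fy + a ^ 2 / (2 * lam) := by
    rw [hexx, hfy, ← EReal.coe_add] at hprox
    exact_mod_cast hprox
  clear_value a
  have hcfy : c ≤ fy := by
    rw [hfc, hfy, EReal.coe_le_coe_iff] at hyc
    exact hyc
  set s := fy - c with hsdef
  have hs0 : 0 ≤ s := by rw [hsdef]; linarith
  set Δ := ex - c with hΔdef
  have hΔ0 : 0 < Δ := by rw [hΔdef]; linarith
  have hΔs : a ^ 2 = 2 * lam * (Δ - s) := by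
    rw [hΔdef, hsdef]
    field_simp at hkey ⊢
    linarith
  clear_value s Δ
  have hΔub : Δ ≤ ε ^ 2 / (2 * lam) := by linarith [hexub]
  have hΔub' : Δ * (2 * lam) ≤ ε ^ 2 := (le_div_iff₀ (by positivity)).mp hΔub
  have hμΔ : μ * Δ ≤ 1 := by
    have h1 : μ * Δ * (2 * lam) ≤ μ * ε ^ 2 := by nlinarith
    nlinarith [hεsq]
  have hΔsle : s ≤ Δ := by nlinarith [hΔs]
  have hasq : a ^ 2 ≤ ε ^ 2 := by nlinarith [hΔs, hΔub', hs0]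
  have haε : a ≤ ε := by nlinarith [hasq, ha0, hε0.le]
  have ha1 : a ≤ 1 := haε.trans hε1
  have ha2 : a ^ 2 ≤ μ * (Δ - s) := by nlinarith [hΔs, hΔsle, hμ]
  -- the sublevel set facts
  set S := slev (moreauEnv f lam) (moreauEnv f lam xb) with hSdef
  have hSsub : slev f (f xb) ⊆ S := by
    intro z hz
    have hz' : f z ≤ f xb := hz
    show moreauEnv f lam z ≤ moreauEnv f lam xb
    rw [hA xb hxb]
    exact (moreau_le_self f lam z).trans hz'
  have hxbS : xb ∈ slev f (f xb) := show f xb ≤ f xb from le_refl _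
  set Bd := EMetric.infEdist y (slev f (f xb)) with hBddef
  have hBne : Bd ≠ ⊤ :=
    ne_top_of_le_ne_top (edist_ne_top y xb) (EMetric.infEdist_le_edist_of_mem hxbS)
  set b := Bd.toReal with hbdef
  have hb0 : 0 ≤ b := hbdef ▸ ENNReal.toReal_nonneg
  have hBb : Bd = ENNReal.ofReal b := by rw [hbdef, ENNReal.ofReal_toReal hBne]
  have hbγ : b ^ γ ≤ μ * s := by
    rcases eq_or_lt_of_le hcfy with hceq | hclt
    · -- f y = f xb : y is in the sublevel set
      have hyS : y ∈ slev f (f xb) := by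
        show f y ≤ f xb
        rw [hfy, hfc, ← hceq]
      have hBd0 : Bd = 0 := by rw [hBddef]; exact EMetric.infEdist_zero_of_mem hyS
      have hbz : b = 0 := by rw [hbdef, hBd0]; simp
      rw [hbz, Real.zero_rpow hγ.ne']
      nlinarith
    · have hfxy : f xb < f y := by rw [hfc, hfy]; exact_mod_cast hclt
      have hyd : Metric.infDist y Λ < εf := by
        have h1 : Metric.infDist y Λ ≤ Metric.infDist x Λ + dist y x :=
          Metric.infDist_le_infDist_add_dist
        have h2 : dist y x = a := by rw [hadef, dist_eq_norm]
        have h3 : Metric.infDist x Λ < ε := hxd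
        linarith [haε, hεf2]
      have hHy := hH xb hxb y hyd hfxy
      have hsub : f y - f xb = ((s : ℝ) : EReal) := by
        rw [hfy, hfc, ← EReal.coe_sub, hsdef]
      rw [hsub, toENN_coe, ← hBddef, hBb] at hHy
      rw [ENNReal.ofReal_rpow_of_nonneg hb0 hγ.le, ← ENNReal.ofReal_mul hμ0.le] at hHy
      exact (ENNReal.ofReal_le_ofReal_iff (by positivity)).mp hHy
  have hb1 : b ≤ 1 := by
    by_contra hbc
    push_neg at hbc
    have hb0' : (0:ℝ) < b := by linarith
    have h1 : (1:ℝ) < b ^ γ := (Real.one_lt_rpow_iff_of_pos hb0').mpr (Or.inl ⟨hbc, hγ⟩)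
    nlinarith [hμΔ, hΔsle]
  -- triangle inequality
  have htri : EMetric.infEdist x S ≤ edist x y + Bd := by
    calc EMetric.infEdist x S ≤ edist x y + EMetric.infEdist y S :=
          EMetric.infEdist_le_edist_add_infEdist
    _ ≤ edist x y + Bd := add_le_add le_rfl (EMetric.infEdist_anti hSsub)
  have hfin2 : edist x y + Bd ≠ ⊤ := ENNReal.add_ne_top.mpr ⟨edist_ne_top _ _, hBne⟩
  have hStop : EMetric.infEdist x S ≠ ⊤ := ne_top_of_le_ne_top hfin2 htri
  set dE := (EMetric.infEdist x S).toReal with hdEdef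
  have hdE0 : 0 ≤ dE := hdEdef ▸ ENNReal.toReal_nonneg
  have hdE : dE ≤ a + b := by
    have h7 := ENNReal.toReal_mono hfin2 htri
    rw [ENNReal.toReal_add (edist_ne_top _ _) hBne, ← dist_edist] at h7
    rw [hdEdef]
    have h8 : dist x y = a := by rw [hadef, dist_eq_norm, norm_sub_rev]
    rw [h8, ← hbdef] at h7
    exact h7
  -- final real-number estimate
  set p := max (2:ℝ) γ with hpdef
  have hp1 : (1:ℝ) ≤ p := le_trans one_le_two (le_max_left _ _)
  have hp2 : (2:ℝ) ≤ p := le_max_left _ _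
  have hpγ : γ ≤ p := le_max_right _ _
  have hmax : max (1:ℝ) (γ - 1) = p - 1 := by
    rw [hpdef, ← max_sub_sub_right 2 γ 1]
    norm_num
  have hfinal : dE ^ p ≤ 2 ^ (p - 1) * μ * Δ := by
    have c1 : dE ^ p ≤ (a + b) ^ p := Real.rpow_le_rpow hdE0 hdE (by linarith)
    have c2 : (a + b) ^ p ≤ 2 ^ (p - 1) * (a ^ p + b ^ p) :=
      add_rpow_le_two_rpow ha0 hb0 hp1
    have c3 : a ^ p ≤ a ^ 2 := by
      have h1 : a ^ p ≤ a ^ (2:ℝ) :=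
        Real.rpow_le_rpow_of_exponent_ge' ha0 ha1 (by norm_num) hp2
      rwa [show a ^ (2:ℝ) = a ^ (2:ℕ) by rw [← Real.rpow_natCast a 2]; norm_num] at h1
    have c4 : b ^ p ≤ b ^ γ := Real.rpow_le_rpow_of_exponent_ge' hb0 hb1 hγ.le hpγ
    have c5 : a ^ p + b ^ p ≤ μ * Δ := by linarith [ha2, hbγ]
    calc dE ^ p ≤ 2 ^ (p - 1) * (a ^ p + b ^ p) := c1.trans c2
    _ ≤ 2 ^ (p - 1) * (μ * Δ) := by
        apply mul_le_mul_of_nonneg_left c5 (Real.rpow_nonneg (by norm_num) _)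
    _ = 2 ^ (p - 1) * μ * Δ := by ring
  -- lift to ℝ≥0∞
  show EMetric.infEdist x S ^ p ≤
      ENNReal.ofReal (2 ^ (max 1 (γ - 1)) * μ) * toENN (moreauEnv f lam x - moreauEnv f lam xb)
  have hsub2 : moreauEnv f lam x - moreauEnv f lam xb = ((Δ : ℝ) : EReal) := by
    rw [hexx, hexb, ← EReal.coe_sub, hΔdef]
  rw [hsub2, toENN_coe, show EMetric.infEdist x S = ENNReal.ofReal dE from
      (ENNReal.ofReal_toReal hStop).symm, ENNReal.ofReal_rpow_of_nonneg hdE0 (by linarith),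
    ← ENNReal.ofReal_mul (by positivity)]
  apply ENNReal.ofReal_le_ofReal
  rw [hmax]
  calc dE ^ p ≤ 2 ^ (p - 1) * μ * Δ := hfinal
  _ = 2 ^ (p - 1) * μ * Δ := rfl

end
end

section
/- Define f : ℝ → ℝ by f(x) = 0 for x ≤ 0, f(x) = x² + 1/n - 1/n² for 1/n < x ≤ 1/(n-1) (n = 3, 4, ...), and f(x) = x² + 1/4 for x > 1/2. Then f does not satisfy the Kurdyka–Łojasiewicz property at x̄ = 0 with any exponent α ∈ [0, 1): for x_n = 1/(n-1), (f(x_n) - f(0))^{-α} · d(0, ∂f(x_n)) → 0 as n → ∞. -/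
open Filter Topology Set
open scoped ENNReal NNReal RealInnerProductSpace

noncomputable section

variable {E : Type*} [NormedAddCommGroup E] [InnerProductSpace ℝ E]

lemma aux16_lsubd (f : ℝ → ℝ) (N : ℝ) (hN : 4 ≤ N)
    (hfmid : ∀ y : ℝ, 1/N < y → y ≤ 1/(N-1) → f y = y^2 + 1/N - 1/N^2)
    (hfright : ∀ y : ℝ, 1/(N-1) < y → y ≤ 1/(N-2) → f y = y^2 + 1/(N-1) - 1/(N-1)^2) :
    (2/(N-1)) ∈ lsubd (fun x => (f x : EReal)) (1/(N-1)) := by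
  have hN0 : (0:ℝ) < N := by linarith
  have hN1 : (0:ℝ) < N - 1 := by linarith
  have hN2 : (0:ℝ) < N - 2 := by linarith
  set x : ℝ := 1/(N-1) with hxdef
  have hx1 : 1/N < x := one_div_lt_one_div_of_lt hN1 (by linarith)
  have hfx : f x = x^2 + 1/N - 1/N^2 := hfmid x hx1 le_rfl
  have h2x : 2/(N-1) = 2 * x := by rw [hxdef]; ring
  refine ⟨fun _ => x, fun _ => 2/(N-1), tendsto_const_nhds, tendsto_const_nhds,
    tendsto_const_nhds, fun k => ?_⟩
  refine ⟨EReal.coe_ne_top _, EReal.coe_ne_bot _, fun ε hε => ?_⟩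
  have hr1 : (0:ℝ) < x - 1/N := by linarith
  have hr2 : (0:ℝ) < 1/(N-2) - x := by
    have := one_div_lt_one_div_of_lt hN2 (by linarith : N - 2 < N - 1)
    linarith
  filter_upwards [Metric.ball_mem_nhds x (lt_min hr1 hr2)] with y hy
  rw [Metric.mem_ball, Real.dist_eq, abs_lt] at hy
  have hmin1 := min_le_left (x - 1/N) (1/(N-2) - x)
  have hmin2 := min_le_right (x - 1/N) (1/(N-2) - x)
  have hy1 : 1/N < y := by linarith [hy.1]
  have hy2 : y < 1/(N-2) := by linarith [hy.2]
  simp only [EReal.toReal_coe, RCLike.inner_apply, conj_trivial, Real.norm_eq_abs,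
    EReal.coe_le_coe_iff]
  rcases le_or_gt y x with hyx | hyx
  · have hfy : f y = y^2 + 1/N - 1/N^2 := hfmid y hy1 hyx
    rw [hfx, hfy, abs_of_nonpos (by linarith)]
    nlinarith [sq_nonneg (y - x), mul_nonneg hε.le (sub_nonneg.2 hyx)]
  · have hfy : f y = y^2 + 1/(N-1) - 1/(N-1)^2 := hfright y hyx hy2.le
    have hδ : 0 ≤ (1/(N-1) - 1/(N-1)^2) - (1/N - 1/N^2) := by
      have hab : 1/N ≤ 1/(N-1) := (one_div_lt_one_div_of_lt hN1 (by linarith)).le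
      have ha : 1/(N-1) ≤ 1/3 := by rw [div_le_div_iff₀ hN1 (by norm_num)]; linarith
      have hb : 1/N ≤ 1/4 := by rw [div_le_div_iff₀ hN0 (by norm_num)]; linarith
      have heq : (1/(N-1) - 1/(N-1)^2) - (1/N - 1/N^2)
          = (1/(N-1) - 1/N) * (1 - 1/(N-1) - 1/N) := by
        field_simp
        ring
      rw [heq]
      exact mul_nonneg (sub_nonneg.2 hab) (by linarith)
    rw [hfx, hfy, abs_of_pos (by linarith)]
    nlinarith [sq_nonneg (y - x), mul_pos hε (by linarith : (0:ℝ) < y - x)]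

lemma aux16_facts (f : ℝ → ℝ)
    (h2 : ∀ n : ℕ, 3 ≤ n → ∀ x : ℝ, 1 / (n:ℝ) < x → x ≤ 1 / ((n:ℝ) - 1) →
      f x = x ^ 2 + 1 / (n:ℝ) - 1 / (n:ℝ) ^ 2)
    (n : ℕ) (hn : 4 ≤ n) :
    1/(n:ℝ) < f (1/((n:ℝ)-1)) ∧ f (1/((n:ℝ)-1)) ≤ 2/((n:ℝ)-1) ∧
    subdist (fun x => (f x : EReal)) (1/((n:ℝ)-1)) ≤ ENNReal.ofReal (2/((n:ℝ)-1)) := by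
  have hN : (4:ℝ) ≤ (n:ℝ) := by exact_mod_cast hn
  set N := (n:ℝ) with hNdef
  have hN0 : (0:ℝ) < N := by linarith
  have hN1 : (0:ℝ) < N - 1 := by linarith
  have hc : ((n - 1 : ℕ) : ℝ) = N - 1 := by
    rw [Nat.cast_sub (by omega), Nat.cast_one]
  have hfmid : ∀ y : ℝ, 1/N < y → y ≤ 1/(N-1) → f y = y^2 + 1/N - 1/N^2 :=
    fun y hy1 hy2 => h2 n (by omega) y hy1 hy2
  have hfright : ∀ y : ℝ, 1/(N-1) < y → y ≤ 1/(N-2) → f y = y^2 + 1/(N-1) - 1/(N-1)^2 := by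
    intro y hy1 hy2
    have h := h2 (n-1) (by omega) y (by rw [hc]; exact hy1)
      (by rw [hc, show N - 1 - 1 = N - 2 by ring]; exact hy2)
    rwa [hc] at h
  have hfx : f (1/(N-1)) = (1/(N-1))^2 + 1/N - 1/N^2 :=
    hfmid _ (one_div_lt_one_div_of_lt hN1 (by linarith)) le_rfl
  have hsq : 1/N^2 < (1/(N-1))^2 := by
    rw [one_div_pow]
    exact one_div_lt_one_div_of_lt (by positivity) (by nlinarith)
  refine ⟨by rw [hfx]; linarith, ?_, ?_⟩
  · rw [hfx]
    have ha : 1/(N-1) ≤ 1/3 := by rw [div_le_div_iff₀ hN1 (by norm_num)]; linarith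
    have hab : 1/N ≤ 1/(N-1) := (one_div_lt_one_div_of_lt hN1 (by linarith)).le
    have hbpos : (0:ℝ) < 1/N := by positivity
    rw [show (2:ℝ)/(N-1) = 2 * (1/(N-1)) by ring, show (1:ℝ)/N^2 = (1/N)^2 by rw [one_div_pow]]
    nlinarith [sq_nonneg (1/N), mul_nonneg (by positivity : (0:ℝ) ≤ 1/(N-1)) (by linarith : (0:ℝ) ≤ 1/3 - 1/(N-1))]
  · have hmem := aux16_lsubd f N hN hfmid hfright
    have h := EMetric.infEdist_le_edist_of_mem (x := (0:ℝ)) hmem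
    refine h.trans (le_of_eq ?_)
    rw [edist_dist, Real.dist_eq, zero_sub, abs_neg, abs_of_nonneg (by positivity)]

theorem stmt16 (f : ℝ → ℝ)
    (h1 : ∀ x ≤ (0:ℝ), f x = 0)
    (h2 : ∀ n : ℕ, 3 ≤ n → ∀ x : ℝ, 1 / (n:ℝ) < x → x ≤ 1 / ((n:ℝ) - 1) →
      f x = x ^ 2 + 1 / (n:ℝ) - 1 / (n:ℝ) ^ 2)
    (h3 : ∀ x > (1/2 : ℝ), f x = x ^ 2 + 1/4) :
    ∀ α : ℝ, 0 ≤ α → α < 1 →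
      (∀ μ > (0:ℝ), ¬ KLAt (fun x => (f x : EReal)) 0 α μ) ∧
      Tendsto (fun n : ℕ =>
          ENNReal.ofReal ((f (1 / ((n:ℝ) - 1)) - f 0) ^ (-α)) *
            subdist (fun x => (f x : EReal)) (1 / ((n:ℝ) - 1)))
        atTop (𝓝 0) := by
  intro α hα0 hα1
  have hf0 : f 0 = 0 := h1 0 le_rfl
  constructor
  · rintro μ hμ ⟨η, hη, ν, hν, H⟩
    have tN : Tendsto (fun n : ℕ => (n:ℝ) - 1) atTop atTop := by
      simpa [sub_eq_add_neg] using
        tendsto_atTop_add_const_right atTop (-1:ℝ) tendsto_natCast_atTop_atTop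
    have t2 : Tendsto (fun n : ℕ => 2/((n:ℝ)-1)) atTop (𝓝 0) :=
      tendsto_const_nhds.div_atTop tN
    have hb1 : ∀ᶠ n : ℕ in atTop, 2/((n:ℝ)-1) < min η ν :=
      t2.eventually_lt_const (lt_min hη hν)
    have tpow : Tendsto (fun n : ℕ => ((n:ℝ))^(1-α)) atTop atTop :=
      (tendsto_rpow_atTop (by linarith)).comp tendsto_natCast_atTop_atTop
    have hb2 : ∀ᶠ n : ℕ in atTop, 4*μ < ((n:ℝ))^(1-α) := tpow.eventually_gt_atTop _
    obtain ⟨n, hn4, hsmall, hbig⟩ := ((eventually_ge_atTop 4).and (hb1.and hb2)).exists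
    obtain ⟨hlow, hup, hsub⟩ := aux16_facts f h2 n hn4
    have hN : (4:ℝ) ≤ (n:ℝ) := by exact_mod_cast hn4
    have hN0 : (0:ℝ) < (n:ℝ) := by linarith
    have hN1 : (0:ℝ) < (n:ℝ) - 1 := by linarith
    have h12 : 1/((n:ℝ)-1) ≤ 2/((n:ℝ)-1) := by
      rw [div_le_div_iff₀ hN1 hN1]; linarith
    have hxball : (1/((n:ℝ)-1)) ∈ Metric.ball (0:ℝ) η := by
      rw [Metric.mem_ball, Real.dist_eq, sub_zero, abs_of_nonneg (by positivity)]
      exact lt_of_le_of_lt h12 (lt_of_lt_of_le hsmall (min_le_left _ _))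
    have hfpos : (0:ℝ) < f (1/((n:ℝ)-1)) := lt_trans (by positivity) hlow
    have hlt1 : ((f 0 : ℝ) : EReal) < ((f (1/((n:ℝ)-1)) : ℝ) : EReal) := by
      rw [hf0]; exact_mod_cast hfpos
    have hlt2 : ((f (1/((n:ℝ)-1)) : ℝ) : EReal) < ((f 0 : ℝ) : EReal) + (ν : EReal) := by
      rw [hf0, ← EReal.coe_add]
      exact_mod_cast lt_of_le_of_lt hup
        (by linarith [lt_of_lt_of_le hsmall (min_le_right η ν)] : 2/((n:ℝ)-1) < 0 + ν)
    have key := H _ hxball hlt1 hlt2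
    have hLHS : toENN (((f (1/((n:ℝ)-1)) : ℝ) : EReal) - ((f 0 : ℝ) : EReal))
        = ENNReal.ofReal (f (1/((n:ℝ)-1))) := by
      rw [← EReal.coe_sub, hf0, sub_zero]
      simp only [toENN, if_neg (EReal.coe_ne_top _), EReal.toReal_coe]
    rw [hLHS] at key
    have step : ENNReal.ofReal ((1/(n:ℝ))^α) ≤ ENNReal.ofReal (2*μ/((n:ℝ)-1)) := by
      calc ENNReal.ofReal ((1/(n:ℝ))^α)
          = ENNReal.ofReal (1/(n:ℝ)) ^ α := (ENNReal.ofReal_rpow_of_pos (by positivity)).symm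
        _ ≤ ENNReal.ofReal (f (1/((n:ℝ)-1))) ^ α :=
            ENNReal.rpow_le_rpow (ENNReal.ofReal_le_ofReal hlow.le) hα0
        _ ≤ ENNReal.ofReal μ * subdist (fun x => (f x : EReal)) (1/((n:ℝ)-1)) := key
        _ ≤ ENNReal.ofReal μ * ENNReal.ofReal (2/((n:ℝ)-1)) := mul_le_mul_right hsub _
        _ = ENNReal.ofReal (μ * (2/((n:ℝ)-1))) := (ENNReal.ofReal_mul hμ.le).symm
        _ = ENNReal.ofReal (2*μ/((n:ℝ)-1)) := by ring_nf
    have hreal : (1/(n:ℝ))^α ≤ 2*μ/((n:ℝ)-1) :=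
      (ENNReal.ofReal_le_ofReal_iff (by positivity)).1 step
    have hNa : (0:ℝ) < (n:ℝ)^α := Real.rpow_pos_of_pos hN0 _
    rw [show (1:ℝ)/(n:ℝ) = ((n:ℝ))⁻¹ from one_div _, Real.inv_rpow hN0.le,
      show ((n:ℝ)^α)⁻¹ = 1/((n:ℝ)^α) from (one_div _).symm,
      div_le_div_iff₀ hNa hN1] at hreal
    rw [show (1:ℝ) - α = 1 - α from rfl, Real.rpow_sub hN0, Real.rpow_one,
      lt_div_iff₀ hNa] at hbig
    nlinarith [hreal, hbig, hN]
  · have hb : Tendsto (fun n : ℕ => ENNReal.ofReal (4 * (n:ℝ)^(α-1))) atTop (𝓝 0) := by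
      have h0 : Tendsto (fun n : ℕ => ((n:ℝ))^(-(1-α))) atTop (𝓝 0) :=
        (tendsto_rpow_neg_atTop (by linarith)).comp tendsto_natCast_atTop_atTop
      have h1' : Tendsto (fun n : ℕ => 4 * ((n:ℝ))^(α-1)) atTop (𝓝 (4*0)) := by
        simpa [neg_sub] using h0.const_mul (4:ℝ)
      rw [mul_zero] at h1'
      simpa using ENNReal.tendsto_ofReal h1'
    refine tendsto_of_tendsto_of_tendsto_of_le_of_le' tendsto_const_nhds hb
      (Eventually.of_forall fun n => zero_le) ?_
    filter_upwards [eventually_ge_atTop 4] with n hn4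
    obtain ⟨hlow, hup, hsub⟩ := aux16_facts f h2 n hn4
    have hN : (4:ℝ) ≤ (n:ℝ) := by exact_mod_cast hn4
    have hN0 : (0:ℝ) < (n:ℝ) := by linarith
    have hN1 : (0:ℝ) < (n:ℝ) - 1 := by linarith
    have hNa : (0:ℝ) < (n:ℝ)^α := Real.rpow_pos_of_pos hN0 _
    calc ENNReal.ofReal ((f (1/((n:ℝ)-1)) - f 0) ^ (-α)) *
          subdist (fun x => (f x : EReal)) (1/((n:ℝ)-1))
        ≤ ENNReal.ofReal ((1/(n:ℝ))^(-α)) * ENNReal.ofReal (2/((n:ℝ)-1)) := by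
          refine mul_le_mul' (ENNReal.ofReal_le_ofReal ?_) hsub
          rw [hf0, sub_zero]
          exact Real.rpow_le_rpow_of_nonpos (by positivity) hlow.le (neg_nonpos.2 hα0)
      _ = ENNReal.ofReal ((1/(n:ℝ))^(-α) * (2/((n:ℝ)-1))) :=
          (ENNReal.ofReal_mul (by positivity)).symm
      _ ≤ ENNReal.ofReal (4 * (n:ℝ)^(α-1)) := by
          apply ENNReal.ofReal_le_ofReal
          have e2 : (1/(n:ℝ))^(-α) = (n:ℝ)^α := by
            rw [one_div, Real.inv_rpow hN0.le, Real.rpow_neg hN0.le, inv_inv]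
          have e3 : ((n:ℝ))^(α-1) = (n:ℝ)^α/(n:ℝ) := by
            rw [Real.rpow_sub hN0, Real.rpow_one]
          rw [e2, e3, show (n:ℝ)^α*(2/((n:ℝ)-1)) = (2*(n:ℝ)^α)/((n:ℝ)-1) by ring,
            show 4*((n:ℝ)^α/(n:ℝ)) = (4*(n:ℝ)^α)/(n:ℝ) by ring,
            div_le_div_iff₀ hN1 hN0]
          nlinarith [mul_nonneg hNa.le (by linarith : (0:ℝ) ≤ 2*(n:ℝ)-4)]

end
end

section
/- Define f : ℝ → ℝ by f(x) = x²(2 + cos(1/x)) for x ≠ 0 and f(0) = 0. Then f does not satisfy the level-set subdifferential error bound at 0 with any exponent γ ∈ [0, ∞): there is a sequence x_k → 0 with x_k ≠ 0 and f'(x_k) = 0 for all k, while d(x_k, lev_{≤0} f) = |x_k| > 0. -/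
open Filter Topology Set
open scoped ENNReal NNReal RealInnerProductSpace

noncomputable section

variable {E : Type*} [NormedAddCommGroup E] [InnerProductSpace ℝ E]

private lemma aux_hasDeriv {f : ℝ → ℝ}
    (h : ∀ x : ℝ, x ≠ 0 → f x = x ^ 2 * (2 + Real.cos (1 / x)))
    {x : ℝ} (hx : x ≠ 0) :
    HasDerivAt f (4*x + 2*x*Real.cos (1/x) + Real.sin (1/x)) x := by
  have h1 : HasDerivAt (fun y : ℝ => 1 / y) (-(x^2)⁻¹) x := by
    simpa [one_div] using (hasDerivAt_inv hx)
  have h2 : HasDerivAt (fun y : ℝ => Real.cos (1/y)) (Real.sin (1/x) * (x^2)⁻¹) x := by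
    have := (Real.hasDerivAt_cos (1/x)).comp x h1
    refine this.congr_deriv ?_
    ring
  have h3 : HasDerivAt (fun y : ℝ => (2:ℝ) + Real.cos (1/y)) (Real.sin (1/x) * (x^2)⁻¹) x := by
    simpa using h2
  have h4 : HasDerivAt (fun y : ℝ => y ^ 2) (2*x) x := by
    simpa using hasDerivAt_pow 2 x
  have hd : HasDerivAt (fun y : ℝ => y ^ 2 * (2 + Real.cos (1/y)))
      (4*x + 2*x*Real.cos (1/x) + Real.sin (1/x)) x := by
    refine (h4.mul h3).congr_deriv ?_
    field_simp
    ring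
  refine hd.congr_of_eventuallyEq ?_
  filter_upwards [eventually_ne_nhds hx] with y hy
  exact h y hy

private lemma aux_crit :
    ∀ k : ℕ, ∃ x : ℝ, 0 < x ∧ x ≤ (2 * Real.pi * (k+1))⁻¹ ∧
      4*x + 2*x*Real.cos (1/x) + Real.sin (1/x) = 0 := by
  intro k
  have hπ := Real.pi_pos
  have hπ3 := Real.pi_gt_three
  have hk : (0:ℝ) ≤ (k:ℝ) := Nat.cast_nonneg k
  set t : ℝ := 2 * Real.pi * (k+1) with ht
  have htpos : 0 < t := by positivity
  set a : ℝ := (t + 3*Real.pi/2)⁻¹ with ha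
  set b : ℝ := t⁻¹ with hb
  have hta : 0 < t + 3*Real.pi/2 := by positivity
  have hapos : 0 < a := inv_pos.mpr hta
  have hbpos : 0 < b := inv_pos.mpr htpos
  have hab : a ≤ b := by
    apply inv_anti₀ htpos; linarith
  have hne : ∀ x ∈ Set.Icc a b, x ≠ 0 := fun x hx => ne_of_gt (lt_of_lt_of_le hapos hx.1)
  set g : ℝ → ℝ := fun x => 4*x + 2*x*Real.cos (1/x) + Real.sin (1/x) with hg
  have hinv : ContinuousOn (fun x : ℝ => 1/x) (Set.Icc a b) :=
    ContinuousOn.div continuousOn_const continuousOn_id hne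
  have hcont : ContinuousOn g (Set.Icc a b) :=
    (((continuousOn_const.mul continuousOn_id).add
      ((continuousOn_const.mul continuousOn_id).mul
        (Real.continuous_cos.comp_continuousOn hinv))).add
      (Real.continuous_sin.comp_continuousOn hinv))
  -- values at endpoints
  have h1b : 1 / b = t := by rw [hb, one_div, inv_inv]
  have h1a : 1 / a = t + 3*Real.pi/2 := by rw [ha, one_div, inv_inv]
  have hcosb : Real.cos (1/b) = 1 := by
    rw [h1b, show t = ((k+1 : ℕ) : ℝ) * (2*Real.pi) by push_cast; ring]
    exact Real.cos_nat_mul_two_pi _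
  have hsinb : Real.sin (1/b) = 0 := by
    rw [h1b, show t = ((2*(k+1) : ℕ) : ℝ) * Real.pi by push_cast; ring]
    exact Real.sin_nat_mul_pi _
  have hcosa : Real.cos (1/a) = 0 := by
    rw [h1a, show t + 3*Real.pi/2 = (Real.pi/2 + Real.pi) + ((k+1 : ℕ) : ℝ) * (2*Real.pi) by
      push_cast; ring]
    rw [Real.cos_add_nat_mul_two_pi, Real.cos_add_pi, Real.cos_pi_div_two, neg_zero]
  have hsina : Real.sin (1/a) = -1 := by
    rw [h1a, show t + 3*Real.pi/2 = (Real.pi/2 + Real.pi) + ((k+1 : ℕ) : ℝ) * (2*Real.pi) by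
      push_cast; ring]
    rw [Real.sin_add_nat_mul_two_pi, Real.sin_add_pi, Real.sin_pi_div_two]
  have hga : g a ≤ 0 := by
    rw [hg]; simp only [hcosa, hsina]
    have h4t : (4:ℝ) < t + 3*Real.pi/2 := by
      rw [ht]; nlinarith
    have : a < 4⁻¹ := by
      rw [ha]; exact inv_strictAnti₀ (by norm_num) h4t
    nlinarith
  have hgb : 0 ≤ g b := by
    rw [hg]; simp only [hcosb, hsinb]; nlinarith
  have hmem : (0:ℝ) ∈ Set.Icc (g a) (g b) := ⟨hga, hgb⟩
  obtain ⟨x, hxmem, hgx⟩ := intermediate_value_Icc hab hcont hmem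
  exact ⟨x, lt_of_lt_of_le hapos hxmem.1, hxmem.2.trans_eq (by rw [hb, ht]), hgx⟩

-- membership of 0 in the limiting subdifferential at a critical point
private lemma aux_lsubd {f : ℝ → ℝ} {x : ℝ} (hd : HasDerivAt f 0 x) :
    (0:ℝ) ∈ lsubd (fun y => (f y : EReal)) x := by
  refine ⟨fun _ => x, fun _ => 0, tendsto_const_nhds, tendsto_const_nhds,
    tendsto_const_nhds, fun k => ?_⟩
  refine ⟨EReal.coe_ne_top _, EReal.coe_ne_bot _, fun ε hε => ?_⟩
  have hlo : (fun y => f y - f x - (y - x) • (0:ℝ)) =o[𝓝 x] fun y => y - x :=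
    hasDerivAt_iff_isLittleO.mp hd
  filter_upwards [hlo.def hε] with y hy
  simp only [smul_zero, sub_zero, Real.norm_eq_abs] at hy
  have h1 : |f y - f x| ≤ ε * |y - x| := hy
  have h2 : f x - ε * |y - x| ≤ f y := by
    cases abs_le.mp h1 with
    | intro hl hr => linarith
  simp only [EReal.toReal_coe, inner_zero_left, add_zero, Real.norm_eq_abs,
    EReal.coe_le_coe_iff]
  exact h2

theorem stmt18 (f : ℝ → ℝ)
    (h : ∀ x : ℝ, x ≠ 0 → f x = x ^ 2 * (2 + Real.cos (1 / x)))
    (h0 : f 0 = 0) :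
    (∀ γ ≥ (0:ℝ), ∀ μ > (0:ℝ), ¬ LSEBAt (fun x => (f x : EReal)) 0 γ μ) ∧
    ∃ xs : ℕ → ℝ, Tendsto xs atTop (𝓝 0) ∧
      ∀ k, xs k ≠ 0 ∧ HasDerivAt f 0 (xs k) ∧
        EMetric.infEdist (xs k) (slev (fun x => (f x : EReal)) ((f 0 : EReal)))
          = ENNReal.ofReal |xs k| := by
  have hfb : ∀ x : ℝ, x ≠ 0 → x^2 ≤ f x ∧ f x ≤ 3*x^2 := by
    intro x hx
    rw [h x hx]
    constructor <;>
      nlinarith [Real.neg_one_le_cos (1/x), Real.cos_le_one (1/x), sq_nonneg x]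
  have hslev : slev (fun x => (f x : EReal)) ((f 0 : EReal)) = {(0:ℝ)} := by
    ext z
    simp only [slev, Set.mem_setOf_eq, Set.mem_singleton_iff, h0, EReal.coe_zero]
    constructor
    · intro hz
      by_contra hz0
      have h1 : z^2 ≤ f z := (hfb z hz0).1
      have h2 : (f z : EReal) ≤ ((0:ℝ):EReal) := by simpa using hz
      have h3 : f z ≤ 0 := EReal.coe_le_coe_iff.mp h2
      have : 0 < z^2 := by positivity
      linarith
    · intro hz; subst hz; simp [h0]
  have hinfE : ∀ x : ℝ,
      EMetric.infEdist x (slev (fun x => (f x : EReal)) ((f 0 : EReal)))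
        = ENNReal.ofReal |x| := by
    intro x
    rw [hslev, EMetric.infEdist, Metric.infEDist_singleton, edist_dist, Real.dist_eq, sub_zero]
  choose xs hx1 hx2 hx3 using aux_crit
  have hder : ∀ k, HasDerivAt f 0 (xs k) := by
    intro k
    have := aux_hasDeriv h (ne_of_gt (hx1 k))
    rwa [hx3 k] at this
  have hb0 : Tendsto (fun k : ℕ => (2 * Real.pi * ((k:ℝ)+1))⁻¹) atTop (𝓝 0) := by
    apply Tendsto.inv_tendsto_atTop
    apply Tendsto.const_mul_atTop (by positivity : (0:ℝ) < 2 * Real.pi)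
    exact tendsto_atTop_add_const_right _ 1 tendsto_natCast_atTop_atTop
  have hxs0 : Tendsto xs atTop (𝓝 0) :=
    squeeze_zero (fun k => (hx1 k).le) (fun k => hx2 k) hb0
  constructor
  · rintro γ hγ μ hμ ⟨η, hη, ν, hν, H⟩
    have h1 : ∀ᶠ k in atTop, xs k < η := hxs0.eventually (gt_mem_nhds hη)
    have hsq : Tendsto (fun k => 3 * (xs k)^2) atTop (𝓝 0) := by
      have := ((hxs0.mul hxs0).const_mul 3)
      simpa [sq] using this
    have h2 : ∀ᶠ k in atTop, 3 * (xs k)^2 < ν := hsq.eventually (gt_mem_nhds hν)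
    obtain ⟨k, hk1, hk2⟩ := (h1.and h2).exists
    set x := xs k with hxk
    have hxpos : 0 < x := hx1 k
    have hxne : x ≠ 0 := ne_of_gt hxpos
    have hball : x ∈ Metric.ball (0:ℝ) η := by
      rw [Metric.mem_ball, Real.dist_eq, sub_zero, abs_of_pos hxpos]
      exact hk1
    have hlt1 : ((f 0 : ℝ) : EReal) < ((f x : ℝ) : EReal) := by
      rw [EReal.coe_lt_coe_iff, h0]
      have := (hfb x hxne).1
      nlinarith
    have hlt2 : ((f x : ℝ) : EReal) < ((f 0 : ℝ) : EReal) + ((ν:ℝ) : EReal) := by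
      rw [← EReal.coe_add, EReal.coe_lt_coe_iff, h0, zero_add]
      have := (hfb x hxne).2
      linarith
    have hkey := H x hball hlt1 hlt2
    have hsd : subdist (fun y => (f y : EReal)) x = 0 :=
      EMetric.infEdist_zero_of_mem (aux_lsubd (hder k))
    rw [hsd, mul_zero, hinfE x] at hkey
    have hpos : 0 < ENNReal.ofReal |x| ^ γ := by
      apply ENNReal.rpow_pos
      · rw [ENNReal.ofReal_pos]; exact abs_pos.mpr hxne
      · exact ENNReal.ofReal_ne_top
    exact absurd hkey (not_le.mpr hpos)
  · exact ⟨xs, hxs0, fun k => ⟨ne_of_gt (hx1 k), hder k, hinfE (xs k)⟩⟩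


end
end
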